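/- Let p ∈ (2,3) and let X : [0,T] → ℝ be a real-valued càdlàg path satisfying Property (RIE) relative to p and a sequence of partitions 𝒫^n with mesh tending to 0, with canonical rough path lift 𝐗 = (X,𝕏). Then: (i) 𝕏_{t−,t} = 0 for every t ∈ (0,T]; (ii) the rough path bracket [𝐗]_t := (X_t − X_0)^2 − 2𝕏_{0,t} satisfies Δ[𝐗]_t = (ΔX_t)^2 for every t ∈ (0,T], where ΔX_t := X_t − X_{t−}; (iii) [𝐗] is increasing (in particular of finite 1-variation); and (iv) Σ_{t∈(0,T]} (ΔX_t)^2 ≤ [𝐗]_T < ∞. Consequently 𝐗 satisfies all the hypotheses required to define the rough exponential of X. -/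

import Mathlib

noncomputable section

open Filter Set Topology

/-- A partition of the interval `[s, t]`: finitely many points
`s = u 0 < u 1 < ⋯ < u n = t`. -/
structure RealPartition (s t : ℝ) where
  n : ℕ
  u : Fin (n + 1) → ℝ
  mono : StrictMono u
  first : u 0 = s
  last : u (Fin.last n) = t

namespace RealPartition

variable {s t : ℝ}

/-- The sum, over the consecutive pairs of points of a partition, of a two-parameter function. -/
def psum {M : Type*} [AddCommMonoid M] (π : RealPartition s t) (f : ℝ → ℝ → M) : M :=
  ∑ i : Fin π.n, f (π.u i.castSucc) (π.u i.succ)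

/-- The mesh size of a partition. -/
def mesh (π : RealPartition s t) : ℝ :=
  ⨆ i : Fin π.n, (π.u i.succ - π.u i.castSucc)

/-- The set of points of a partition. -/
def points (π : RealPartition s t) : Set ℝ := Set.range π.u

/-- The `k`-th point of a partition (clamped at the right end). -/
def pt (π : RealPartition s t) (k : ℕ) : ℝ :=
  π.u ⟨min k π.n, Nat.lt_succ_of_le (Nat.min_le_right _ _)⟩

/-- The index of the last partition point `≤ x`. -/
def idx (π : RealPartition s t) (x : ℝ) : ℕ :=
  sSup {k : ℕ | k ≤ π.n ∧ π.pt k ≤ x}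

/-- The largest partition point `≤ x`. -/
def floorPt (π : RealPartition s t) (x : ℝ) : ℝ := π.pt (π.idx x)

end RealPartition

/-- The piecewise-constant approximation of a path along a partition (left endpoints). -/
def pcApprox {s t : ℝ} (π : RealPartition s t) {E : Type*} (X : ℝ → E) : ℝ → E :=
  fun x => X (π.floorPt x)

section Var

variable {E : Type*} [NormedAddCommGroup E]

/-- The increment `X b - X a` of a path, as a two-parameter function. -/
def incr (X : ℝ → E) : ℝ → ℝ → E := fun a b => X b - X a

/-- The `p`-variation sum of a two-parameter function along a partition. -/
def varSum (p : ℝ) (f : ℝ → ℝ → E) {s t : ℝ} (π : RealPartition s t) : ℝ :=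
  π.psum fun a b => ‖f a b‖ ^ p

/-- A two-parameter function has finite `p`-variation on `[s,t]`. -/
def FiniteVar (p : ℝ) (f : ℝ → ℝ → E) (s t : ℝ) : Prop :=
  BddAbove (Set.range fun π : RealPartition s t => varSum p f π)

/-- The `p`-variation of a two-parameter function on `[s,t]`;
for a path `X` one takes `f = incr X`. -/
def pVar (p : ℝ) (f : ℝ → ℝ → E) (s t : ℝ) : ℝ :=
  (⨆ π : RealPartition s t, varSum p f π) ^ (1 / p)

/-- `sup_{s ≤ u < t}` of the `p`-variation on `[s,u]`, i.e. `‖·‖_{p,[s,t)}`. -/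
def pVarOpen (p : ℝ) (f : ℝ → ℝ → E) (s t : ℝ) : ℝ :=
  ⨆ u : {u : ℝ // s ≤ u ∧ u < t}, pVar p f s u

/-- The supremum norm of a path on `[s,t]`. -/
def supNormOn (f : ℝ → E) (s t : ℝ) : ℝ :=
  ⨆ x : Set.Icc s t, ‖f x‖

/-- The supremum norm of a two-parameter function on the simplex over `[s,t]`. -/
def supNormOn2 (g : ℝ → ℝ → E) (s t : ℝ) : ℝ :=
  ⨆ z : {z : ℝ × ℝ // s ≤ z.1 ∧ z.1 ≤ z.2 ∧ z.2 ≤ t}, ‖g z.1.1 z.1.2‖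

end Var

section Cadlag

variable {F : Type*} [TopologicalSpace F]

/-- A path is càdlàg on `[0,T]`: right-continuous on `[0,T)` with left limits on `(0,T]`. -/
def CadlagOn (X : ℝ → F) (T : ℝ) : Prop :=
  (∀ u ∈ Set.Ico (0:ℝ) T, Tendsto X (nhdsWithin u (Set.Ioc u T)) (nhds (X u))) ∧
  (∀ u ∈ Set.Ioc (0:ℝ) T, ∃ L : F, Tendsto X (nhdsWithin u (Set.Ico 0 u)) (nhds L))

/-- The set of jump times of a path in `(0,T]`. -/
def jumpSet (X : ℝ → F) (T : ℝ) : Set ℝ :=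
  {u | u ∈ Set.Ioc 0 T ∧ ∃ L : F, Tendsto X (nhdsWithin u (Set.Iio u)) (nhds L) ∧ L ≠ X u}

end Cadlag

/-- The `j`-th standard basis vector of `ℝ^D`. -/
def bvec (D : ℕ) (j : Fin D) : Fin D → ℝ := Pi.single j 1

/-- The tensor product of two vectors. -/
def tensor {D₁ D₂ : ℕ} (x : Fin D₁ → ℝ) (y : Fin D₂ → ℝ) : Fin D₁ → Fin D₂ → ℝ :=
  fun i j => x i * y j

section Controlled

variable {D : ℕ} {E : Type*} [NormedAddCommGroup E] [NormedSpace ℝ E]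

/-- The remainder `R^Y_{s,t} = Y_t - Y_s - Y'_s X_{s,t}` of a controlled path. -/
def remainder (X : ℝ → Fin D → ℝ) (Y : ℝ → E) (Y' : ℝ → (Fin D → ℝ) →L[ℝ] E) :
    ℝ → ℝ → E :=
  fun a b => Y b - Y a - Y' a (X b - X a)

/-- `(Y, Y')` is a controlled path with respect to `X`, with respect to the exponent `p`,
on the time interval `[0,T]`. -/
structure IsControlledPath (p T : ℝ) (X : ℝ → Fin D → ℝ)
    (Y : ℝ → E) (Y' : ℝ → (Fin D → ℝ) →L[ℝ] E) : Prop where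
  cadlagY : CadlagOn Y T
  cadlagY' : CadlagOn Y' T
  finY : FiniteVar p (incr Y) 0 T
  finY' : FiniteVar p (incr Y') 0 T
  finR : FiniteVar (p / 2) (remainder X Y Y') 0 T

/-- The controlled-path norm `‖Y,Y'‖_{𝒱^p_X}`. -/
def cpNorm (p T : ℝ) (X : ℝ → Fin D → ℝ) (Y : ℝ → E) (Y' : ℝ → (Fin D → ℝ) →L[ℝ] E) : ℝ :=
  ‖Y 0‖ + ‖Y' 0‖ + pVar p (incr Y') 0 T + pVar (p / 2) (remainder X Y Y') 0 T

/-- The controlled-path distance `‖Y;Y₂‖_{𝒱^p_X,𝒱^p_{X₂}}`. -/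
def cpDist (p T : ℝ) (X X₂ : ℝ → Fin D → ℝ) (Y : ℝ → E) (Y' : ℝ → (Fin D → ℝ) →L[ℝ] E)
    (Y₂ : ℝ → E) (Y₂' : ℝ → (Fin D → ℝ) →L[ℝ] E) : ℝ :=
  ‖Y 0 - Y₂ 0‖ + ‖Y' 0 - Y₂' 0‖ + pVar p (incr fun u => Y' u - Y₂' u) 0 T
    + pVar (p / 2) (fun a b => remainder X Y Y' a b - remainder X₂ Y₂ Y₂' a b) 0 T

end Controlled

/-- `(X, XX)` is a càdlàg rough path over `ℝ^D` on `[0,T]`. -/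
structure IsRoughPath (p T : ℝ) {D : ℕ} (X : ℝ → Fin D → ℝ)
    (XX : ℝ → ℝ → Fin D → Fin D → ℝ) : Prop where
  cadlag : CadlagOn X T
  cadlagXXleft : ∀ t ∈ Set.Icc (0:ℝ) T, CadlagOn (fun s => XX s t) T
  cadlagXXright : ∀ s ∈ Set.Icc (0:ℝ) T, CadlagOn (fun t => XX s t) T
  finX : FiniteVar p (incr X) 0 T
  finXX : FiniteVar (p / 2) XX 0 T
  chen : ∀ ⦃a b c : ℝ⦄, 0 ≤ a → a ≤ b → b ≤ c → c ≤ T →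
      XX a c = XX a b + XX b c + tensor (X b - X a) (X c - X b)

/-- The rough path (semi-)norm `‖X‖_p + ‖XX‖_{p/2}`. -/
def rpNorm (p T : ℝ) {D : ℕ} (X : ℝ → Fin D → ℝ) (XX : ℝ → ℝ → Fin D → Fin D → ℝ) : ℝ :=
  pVar p (incr X) 0 T + pVar (p / 2) XX 0 T

/-- The rough path distance `‖X;X₂‖_p`. -/
def rpDist (p T : ℝ) {D : ℕ} (X : ℝ → Fin D → ℝ) (XX : ℝ → ℝ → Fin D → Fin D → ℝ)
    (X₂ : ℝ → Fin D → ℝ) (XX₂ : ℝ → ℝ → Fin D → Fin D → ℝ) : ℝ :=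
  pVar p (incr fun u => X u - X₂ u) 0 T + pVar (p / 2) (fun a b => XX a b - XX₂ a b) 0 T

section RoughIntegral

variable {D : ℕ} {E₁ E₂ : Type*} [NormedAddCommGroup E₁] [NormedSpace ℝ E₁]
  [NormedAddCommGroup E₂] [NormedSpace ℝ E₂]

/-- Compensated Riemann sum of a scalar controlled path `(F,F')` against a scalar controlled
path `(G,G')`, relative to the second-level component `XX`. -/
def compSum1 (XX : ℝ → ℝ → Fin D → Fin D → ℝ)
    (F : ℝ → ℝ) (F' : ℝ → (Fin D → ℝ) →L[ℝ] ℝ)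
    (G : ℝ → ℝ) (G' : ℝ → (Fin D → ℝ) →L[ℝ] ℝ)
    {s t : ℝ} (π : RealPartition s t) : ℝ :=
  π.psum fun a b =>
    F a * (G b - G a) + ∑ j, ∑ l, XX a b j l * (F' a (bvec D j) * G' a (bvec D l))

/-- `I` is the (scalar) rough integral `∫_s^t F dG`. -/
def IsRoughInt1 (XX : ℝ → ℝ → Fin D → Fin D → ℝ)
    (F : ℝ → ℝ) (F' : ℝ → (Fin D → ℝ) →L[ℝ] ℝ)
    (G : ℝ → ℝ) (G' : ℝ → (Fin D → ℝ) →L[ℝ] ℝ) (s t : ℝ) (I : ℝ) : Prop :=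
  ∀ π : ℕ → RealPartition s t, Tendsto (fun n => (π n).mesh) atTop (nhds 0) →
    Tendsto (fun n => compSum1 XX F F' G G' (π n)) atTop (nhds I)

/-- Compensated Riemann sum of an operator-valued controlled path `(F,F')` against a
vector-valued controlled path `(G,G')`. -/
def compSumCC (XX : ℝ → ℝ → Fin D → Fin D → ℝ)
    (F : ℝ → E₁ →L[ℝ] E₂) (F' : ℝ → (Fin D → ℝ) →L[ℝ] (E₁ →L[ℝ] E₂))
    (G : ℝ → E₁) (G' : ℝ → (Fin D → ℝ) →L[ℝ] E₁) {s t : ℝ} (π : RealPartition s t) : E₂ :=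
  π.psum fun a b =>
    F a (G b - G a) + ∑ j, ∑ l, XX a b j l • (F' a (bvec D j)) (G' a (bvec D l))

/-- `I` is the rough integral `∫_s^t F dG` of a controlled path against a controlled path. -/
def IsRoughIntCC (XX : ℝ → ℝ → Fin D → Fin D → ℝ)
    (F : ℝ → E₁ →L[ℝ] E₂) (F' : ℝ → (Fin D → ℝ) →L[ℝ] (E₁ →L[ℝ] E₂))
    (G : ℝ → E₁) (G' : ℝ → (Fin D → ℝ) →L[ℝ] E₁) (s t : ℝ) (I : E₂) : Prop :=
  ∀ π : ℕ → RealPartition s t, Tendsto (fun n => (π n).mesh) atTop (nhds 0) →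
    Tendsto (fun n => compSumCC XX F F' G G' (π n)) atTop (nhds I)

/-- Compensated Riemann sum of an operator-valued controlled path `(Y,Y')` against the rough
path `(X,XX)` itself. -/
def compSumX (X : ℝ → Fin D → ℝ) (XX : ℝ → ℝ → Fin D → Fin D → ℝ)
    (Y : ℝ → (Fin D → ℝ) →L[ℝ] E₂) (Y' : ℝ → (Fin D → ℝ) →L[ℝ] ((Fin D → ℝ) →L[ℝ] E₂))
    {s t : ℝ} (π : RealPartition s t) : E₂ :=
  π.psum fun a b =>
    Y a (X b - X a) + ∑ j, ∑ l, XX a b j l • (Y' a (bvec D j)) (bvec D l)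

/-- `I` is the rough integral `∫_s^t Y dX` of a controlled path against the rough path `(X,XX)`. -/
def IsRoughIntX (X : ℝ → Fin D → ℝ) (XX : ℝ → ℝ → Fin D → Fin D → ℝ)
    (Y : ℝ → (Fin D → ℝ) →L[ℝ] E₂) (Y' : ℝ → (Fin D → ℝ) →L[ℝ] ((Fin D → ℝ) →L[ℝ] E₂))
    (s t : ℝ) (I : E₂) : Prop :=
  ∀ π : ℕ → RealPartition s t, Tendsto (fun n => (π n).mesh) atTop (nhds 0) →
    Tendsto (fun n => compSumX X XX Y Y' (π n)) atTop (nhds I)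

/-- Compensated (tensor-valued) Riemann sums of a vector-valued controlled path against itself. -/
def compSumSelf {D₂ : ℕ} (XX : ℝ → ℝ → Fin D → Fin D → ℝ)
    (Y : ℝ → Fin D₂ → ℝ) (Y' : ℝ → (Fin D → ℝ) →L[ℝ] (Fin D₂ → ℝ))
    {s t : ℝ} (π : RealPartition s t) : Fin D₂ → Fin D₂ → ℝ :=
  π.psum fun a b => fun i k =>
    Y a i * (Y b k - Y a k) + ∑ j, ∑ l, XX a b j l * (Y' a (bvec D j) i * Y' a (bvec D l) k)

/-- `I` is the rough integral `∫_s^t Y ⊗ dY` of a controlled path against itself. -/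
def IsRoughIntSelf {D₂ : ℕ} (XX : ℝ → ℝ → Fin D → Fin D → ℝ)
    (Y : ℝ → Fin D₂ → ℝ) (Y' : ℝ → (Fin D → ℝ) →L[ℝ] (Fin D₂ → ℝ))
    (s t : ℝ) (I : Fin D₂ → Fin D₂ → ℝ) : Prop :=
  ∀ π : ℕ → RealPartition s t, Tendsto (fun n => (π n).mesh) atTop (nhds 0) →
    Tendsto (fun n => compSumSelf XX Y Y' (π n)) atTop (nhds I)

/-- `I` is the Riemann–Stieltjes integral `∫_s^t f dg` (limit of left-point Riemann sums). -/
def IsRSInt (g : ℝ → ℝ) (f : ℝ → ℝ) (s t : ℝ) (I : ℝ) : Prop :=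
  ∀ π : ℕ → RealPartition s t, Tendsto (fun n => (π n).mesh) atTop (nhds 0) →
    Tendsto (fun n => (π n).psum fun a b => f a * (g b - g a)) atTop (nhds I)

end RoughIntegral

section RIE

variable {D : ℕ}

/-- The Riemann sums `∫_0^t X^n ⊗ dX` appearing in Property (RIE). -/
def riemannProd {T : ℝ} (π : RealPartition 0 T) (X : ℝ → Fin D → ℝ) (t : ℝ) :
    Fin D → Fin D → ℝ :=
  π.psum fun a b => tensor (X a) (X (min b t) - X (min a t))

/-- A control function on `[0,T]`: nonnegative and superadditive. -/
def IsControl (w : ℝ → ℝ → ℝ) (T : ℝ) : Prop :=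
  (∀ a b : ℝ, 0 ≤ a → a ≤ b → b ≤ T → 0 ≤ w a b) ∧
  ∀ a b c : ℝ, 0 ≤ a → a ≤ b → b ≤ c → c ≤ T → w a b + w b c ≤ w a c

/-- The inequality of Property (RIE), part (iii), holds for `X` with control function `w`:
the sum of the two suprema appearing there is at most `1`. -/
def RIEControlFor (p T : ℝ) (Pseq : ℕ → RealPartition 0 T) (X : ℝ → Fin D → ℝ)
    (w : ℝ → ℝ → ℝ) : Prop :=
  ∃ a b : ℝ, 0 ≤ a ∧ 0 ≤ b ∧ a + b ≤ 1 ∧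
    (∀ s t : ℝ, 0 ≤ s → s ≤ t → t ≤ T → ‖X t - X s‖ ^ p ≤ a * w s t) ∧
    ∀ n k l : ℕ, k < l → l ≤ (Pseq n).n →
      ‖(fun i j => riemannProd (Pseq n) X ((Pseq n).pt l) i j - riemannProd (Pseq n) X ((Pseq n).pt k) i j
          - X ((Pseq n).pt k) i * (X ((Pseq n).pt l) j - X ((Pseq n).pt k) j) : Fin D → Fin D → ℝ)‖
          ^ (p / 2)
        ≤ b * w ((Pseq n).pt k) ((Pseq n).pt l)

/-- Property (RIE) for a path `X`, relative to `p` and a sequence of partitions. -/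
structure RIE (p T : ℝ) (Pseq : ℕ → RealPartition 0 T) (X : ℝ → Fin D → ℝ) : Prop where
  cadlag : CadlagOn X T
  mesh_lim : Tendsto (fun n => (Pseq n).mesh) atTop (nhds 0)
  pc_unif : TendstoUniformlyOn (fun n => pcApprox (Pseq n) X) X atTop (Set.Icc 0 T)
  riemann_unif : ∃ I : ℝ → Fin D → Fin D → ℝ,
    TendstoUniformlyOn (fun n => riemannProd (Pseq n) X) I atTop (Set.Icc 0 T)
  rie_bound : ∃ w : ℝ → ℝ → ℝ, IsControl w T ∧ RIEControlFor p T Pseq X w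

/-- The canonical second-level rough path lift `𝕏_{s,t} = ∫_s^t X ⊗ dX - X_s ⊗ X_{s,t}`
built from the limit `I t = ∫_0^t X ⊗ dX` of the Riemann sums of Property (RIE). -/
def liftOf (X : ℝ → Fin D → ℝ) (I : ℝ → Fin D → Fin D → ℝ) :
    ℝ → ℝ → Fin D → Fin D → ℝ :=
  fun s t i j => I t i j - I s i j - X s i * (X t j - X s j)

end RIE

/-- `liminf_n Pseq^n = ⋃_m ⋂_{n ≥ m} Pseq^n` of a sequence of partitions. -/
def liminfPts {T : ℝ} (Pseq : ℕ → RealPartition 0 T) : Set ℝ :=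
  ⋃ m : ℕ, ⋂ n : ℕ, ⋂ (_ : m ≤ n), (Pseq n).points

end

noncomputable section
open Filter Set Topology

/-- Remainder of a one-dimensional controlled path. -/
def remainder1 (X Y Y' : ℝ → ℝ) : ℝ → ℝ → ℝ :=
  fun a b => Y b - Y a - Y' a * (X b - X a)

/-- One-dimensional controlled path. -/
structure IsControlledPath1 (p T : ℝ) (X Y Y' : ℝ → ℝ) : Prop where
  cadlagY : CadlagOn Y T
  cadlagY' : CadlagOn Y' T
  finY : FiniteVar p (incr Y) 0 T
  finY' : FiniteVar p (incr Y') 0 T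
  finR : FiniteVar (p / 2) (remainder1 X Y Y') 0 T

/-- One-dimensional càdlàg rough path. -/
structure IsRoughPath1 (p T : ℝ) (X : ℝ → ℝ) (XX : ℝ → ℝ → ℝ) : Prop where
  cadlag : CadlagOn X T
  cadlagXXleft : ∀ t ∈ Set.Icc (0:ℝ) T, CadlagOn (fun s => XX s t) T
  cadlagXXright : ∀ s ∈ Set.Icc (0:ℝ) T, CadlagOn (fun t => XX s t) T
  finX : FiniteVar p (incr X) 0 T
  finXX : FiniteVar (p / 2) XX 0 T
  chen : ∀ ⦃a b c : ℝ⦄, 0 ≤ a → a ≤ b → b ≤ c → c ≤ T →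
      XX a c = XX a b + XX b c + (X b - X a) * (X c - X b)

/-- `I` is the rough integral `∫_s^t Y dX` of a one-dimensional controlled path `(Y,Y')`
against the one-dimensional rough path `(X,XX)`. -/
def IsRoughIntX1 (X : ℝ → ℝ) (XX : ℝ → ℝ → ℝ) (Y Y' : ℝ → ℝ) (s t : ℝ) (I : ℝ) : Prop :=
  ∀ π : ℕ → RealPartition s t, Tendsto (fun n => (π n).mesh) atTop (nhds 0) →
    Tendsto (fun n => (π n).psum fun a b => Y a * (X b - X a) + Y' a * XX a b) atTop (nhds I)

/-- The jump `ΔX_t = X_t − X_{t−}` of a real-valued path. -/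
def jump1 (X : ℝ → ℝ) (u : ℝ) : ℝ := X u - Function.leftLim X u

/-- The rough path bracket `[𝐗]_t = (X_{0,t})^2 − 2 𝕏_{0,t}`. -/
def bracket1 (X : ℝ → ℝ) (XX : ℝ → ℝ → ℝ) (t : ℝ) : ℝ := (X t - X 0) ^ 2 - 2 * XX 0 t

/-- `Σ_{0 < s ≤ t} (ΔX_s)^2`. -/
def jumpSqSum (X : ℝ → ℝ) (t : ℝ) : ℝ := ∑' u : Set.Ioc (0:ℝ) t, jump1 X u.1 ^ 2

/-- `Π_{0 < s ≤ t} (1 + ΔX_s) e^{−ΔX_s}`. -/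
def jumpProd (X : ℝ → ℝ) (t : ℝ) : ℝ :=
  ∏' u : Set.Ioc (0:ℝ) t, ((1 + jump1 X u.1) * Real.exp (-jump1 X u.1))

/-- The rough exponential `ℰ(X)_t = exp(X_t − Γ_t/2) Π_{0<s≤t} (1+ΔX_s)e^{−ΔX_s}`,
where `Γ_t = [𝐗]_t − Σ_{s≤t} (ΔX_s)^2`. -/
def roughExp (X : ℝ → ℝ) (XX : ℝ → ℝ → ℝ) (t : ℝ) : ℝ :=
  Real.exp (X t - (bracket1 X XX t - jumpSqSum X t) / 2) * jumpProd X t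

end

noncomputable section
open Filter Set Topology

/-- The Riemann sums `∫_0^t X^n dX` of Property (RIE) for a one-dimensional path. -/
def riemann1 {T : ℝ} (π : RealPartition 0 T) (X : ℝ → ℝ) (t : ℝ) : ℝ :=
  π.psum fun a b => X a * (X (min b t) - X (min a t))

/-- The inequality of Property (RIE), part (iii), for a one-dimensional path. -/
def RIEControlFor1 (p T : ℝ) (Pseq : ℕ → RealPartition 0 T) (X : ℝ → ℝ) (w : ℝ → ℝ → ℝ) : Prop :=
  ∃ a b : ℝ, 0 ≤ a ∧ 0 ≤ b ∧ a + b ≤ 1 ∧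
    (∀ s t : ℝ, 0 ≤ s → s ≤ t → t ≤ T → |X t - X s| ^ p ≤ a * w s t) ∧
    ∀ n k l : ℕ, k < l → l ≤ (Pseq n).n →
      |riemann1 (Pseq n) X ((Pseq n).pt l) - riemann1 (Pseq n) X ((Pseq n).pt k)
          - X ((Pseq n).pt k) * (X ((Pseq n).pt l) - X ((Pseq n).pt k))| ^ (p / 2)
        ≤ b * w ((Pseq n).pt k) ((Pseq n).pt l)

/-- Property (RIE) for a one-dimensional path. -/
structure RIE1 (p T : ℝ) (Pseq : ℕ → RealPartition 0 T) (X : ℝ → ℝ) : Prop where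
  cadlag : CadlagOn X T
  mesh_lim : Tendsto (fun n => (Pseq n).mesh) atTop (nhds 0)
  pc_unif : TendstoUniformlyOn (fun n => pcApprox (Pseq n) X) X atTop (Set.Icc 0 T)
  riemann_unif : ∃ I : ℝ → ℝ,
    TendstoUniformlyOn (fun n => riemann1 (Pseq n) X) I atTop (Set.Icc 0 T)
  rie_bound : ∃ w : ℝ → ℝ → ℝ, IsControl w T ∧ RIEControlFor1 p T Pseq X w

namespace RealPartition
variable {T : ℝ} (π : RealPartition 0 T)

lemma u_nonneg (i : Fin (π.n + 1)) : 0 ≤ π.u i := by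
  have h := π.mono.monotone (Fin.zero_le i)
  rw [π.first] at h; exact h

lemma u_le_T (i : Fin (π.n + 1)) : π.u i ≤ T := by
  have h := π.mono.monotone (Fin.le_last i)
  rw [π.last] at h; exact h

lemma n_pos (hT : 0 < T) : 0 < π.n := by
  rcases Nat.eq_zero_or_pos π.n with h | h
  · exfalso
    have h1 : π.u 0 = π.u (Fin.last π.n) := by congr 1; ext; simp [h, Fin.last]
    rw [π.first, π.last] at h1; linarith
  · exact h

lemma pt_eq {m : ℕ} (hm : m ≤ π.n) : π.pt m = π.u ⟨m, Nat.lt_succ_of_le hm⟩ := by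
  unfold pt; congr 1; ext; simp [Nat.min_eq_left hm]

lemma pt_mono {m m' : ℕ} (h : m ≤ m') : π.pt m ≤ π.pt m' := by
  unfold pt
  refine π.mono.monotone ?_
  simp only [Fin.le_def]
  omega

lemma pt_zero : π.pt 0 = 0 := by
  rw [π.pt_eq (Nat.zero_le _)]
  have h : (⟨0, Nat.lt_succ_of_le (Nat.zero_le _)⟩ : Fin (π.n+1)) = 0 := by ext; simp
  rw [h, π.first]

lemma pt_top {m : ℕ} (hm : π.n ≤ m) : π.pt m = T := by
  unfold pt
  have h : (⟨min m π.n, Nat.lt_succ_of_le (Nat.min_le_right _ _)⟩ : Fin (π.n+1)) = Fin.last π.n := by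
    ext; simp [Nat.min_eq_right hm, Fin.last]
  rw [h, π.last]

lemma pt_nonneg (m : ℕ) : 0 ≤ π.pt m := π.u_nonneg _

lemma pt_le_T (m : ℕ) : π.pt m ≤ T := π.u_le_T _

lemma pt_lt_pt {m m' : ℕ} (h : m < m') (h' : m' ≤ π.n) : π.pt m < π.pt m' := by
  rw [π.pt_eq (le_of_lt (lt_of_lt_of_le h h')), π.pt_eq h']
  exact π.mono (by simp [Fin.lt_def]; exact h)

lemma idx_mem {x : ℝ} (hx : 0 ≤ x) : π.idx x ≤ π.n ∧ π.pt (π.idx x) ≤ x := by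
  have hne : {k : ℕ | k ≤ π.n ∧ π.pt k ≤ x}.Nonempty := ⟨0, Nat.zero_le _, by rw [π.pt_zero]; exact hx⟩
  have hbdd : BddAbove {k : ℕ | k ≤ π.n ∧ π.pt k ≤ x} := ⟨π.n, fun k hk => hk.1⟩
  exact Nat.sSup_mem hne hbdd

lemma idx_le (x : ℝ) (hx : 0 ≤ x) : π.idx x ≤ π.n := (π.idx_mem hx).1

lemma floor_le {x : ℝ} (hx : 0 ≤ x) : π.pt (π.idx x) ≤ x := (π.idx_mem hx).2

lemma lt_of_idx_lt {x : ℝ} (hx : 0 ≤ x) (h : π.idx x < π.n) : x < π.pt (π.idx x + 1) := by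
  by_contra hc
  push_neg at hc
  have : π.idx x + 1 ≤ π.idx x := le_csSup ⟨π.n, fun k hk => hk.1⟩ ⟨h, hc⟩
  omega

lemma idx_mono {x y : ℝ} (hx : 0 ≤ x) (h : x ≤ y) : π.idx x ≤ π.idx y := by
  have hm := π.idx_mem hx
  exact le_csSup (s := {k : ℕ | k ≤ π.n ∧ π.pt k ≤ y}) ⟨π.n, fun k hk => hk.1⟩
    ⟨hm.1, hm.2.trans h⟩

lemma gap_le_mesh (i : Fin π.n) : π.u i.succ - π.u i.castSucc ≤ π.mesh := by
  have : Nonempty (Fin π.n) := ⟨i⟩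
  exact le_ciSup (f := fun i : Fin π.n => π.u i.succ - π.u i.castSucc)
    (Set.Finite.bddAbove (Set.finite_range _)) i

lemma mesh_nonneg (hT : 0 < T) : 0 ≤ π.mesh := by
  have hn := π.n_pos hT
  have i : Fin π.n := ⟨0, hn⟩
  refine le_trans ?_ (π.gap_le_mesh i)
  have := π.mono (show i.castSucc < i.succ by simp [Fin.lt_def])
  linarith

lemma floor_ge {x : ℝ} (hx : 0 ≤ x) (hxT : x ≤ T) (hT : 0 < T) :
    x - π.mesh ≤ π.pt (π.idx x) := by
  rcases lt_or_ge (π.idx x) π.n with h | h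
  · have h1 := π.lt_of_idx_lt hx h
    have hg := π.gap_le_mesh ⟨π.idx x, h⟩
    have e1 : π.pt (π.idx x + 1) = π.u (⟨π.idx x, h⟩ : Fin π.n).succ := by
      rw [π.pt_eq (by omega : π.idx x + 1 ≤ π.n)]; congr 1
    have e2 : π.pt (π.idx x) = π.u (⟨π.idx x, h⟩ : Fin π.n).castSucc := by
      rw [π.pt_eq (le_of_lt h)]; congr 1
    rw [e1] at h1
    rw [e2]
    linarith
  · rw [π.pt_top h]
    have := π.mesh_nonneg hT
    linarith

lemma idx_eq {x : ℝ} (k : Fin π.n) (h1 : π.u k.castSucc ≤ x) (h2 : x < π.u k.succ) :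
    π.idx x = k.val := by
  have hkn : (k : ℕ) ≤ π.n := le_of_lt k.isLt
  have hmem : (k : ℕ) ∈ {m : ℕ | m ≤ π.n ∧ π.pt m ≤ x} := by
    refine ⟨hkn, ?_⟩
    rw [π.pt_eq hkn]
    exact le_trans (le_of_eq (by congr 1)) h1
  have hub : ∀ m ∈ {m : ℕ | m ≤ π.n ∧ π.pt m ≤ x}, m ≤ (k : ℕ) := by
    rintro m ⟨hm, hmx⟩
    by_contra hc
    push_neg at hc
    have hk1 : (k : ℕ) + 1 ≤ m := hc
    have : π.u k.succ ≤ π.pt m := by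
      rw [π.pt_eq hm]
      exact π.mono.monotone (by simp [Fin.le_def]; omega)
    linarith
  exact le_antisymm (csSup_le ⟨_, hmem⟩ hub) (le_csSup ⟨π.n, fun m hm => hm.1⟩ hmem)

lemma floorPt_eq {x : ℝ} (k : Fin π.n) (h1 : π.u k.castSucc ≤ x) (h2 : x < π.u k.succ) :
    π.floorPt x = π.u k.castSucc := by
  unfold floorPt
  rw [π.idx_eq k h1 h2, π.pt_eq (le_of_lt k.isLt)]
  congr 1

end RealPartition

namespace RealPartition
variable {T : ℝ} (π : RealPartition 0 T)

lemma pt_succ_fin (i : Fin π.n) : π.pt (i.val + 1) = π.u i.succ := by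
  rw [π.pt_eq (by omega : i.val + 1 ≤ π.n)]; congr 1

lemma pt_castSucc_fin (i : Fin π.n) : π.pt i.val = π.u i.castSucc := by
  rw [π.pt_eq (le_of_lt i.isLt)]; congr 1

lemma psum_telescope (G : ℝ → ℝ) : π.psum (fun a b => G b - G a) = G T - G 0 := by
  unfold psum
  have e1 : ∀ i : Fin π.n, G (π.u i.succ) - G (π.u i.castSucc)
      = G (π.pt (i.val + 1)) - G (π.pt i.val) := by
    intro i
    rw [π.pt_succ_fin i, π.pt_castSucc_fin i]
  calc ∑ i : Fin π.n, (G (π.u i.succ) - G (π.u i.castSucc))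
      = ∑ i : Fin π.n, (G (π.pt (i.val + 1)) - G (π.pt i.val)) :=
        Finset.sum_congr rfl (fun i _ => e1 i)
    _ = ∑ i ∈ Finset.range π.n, (G (π.pt (i + 1)) - G (π.pt i)) :=
        Fin.sum_univ_eq_sum_range (fun m => G (π.pt (m + 1)) - G (π.pt m)) π.n
    _ = G (π.pt π.n) - G (π.pt 0) := Finset.sum_range_sub (fun m => G (π.pt m)) π.n
    _ = G T - G 0 := by rw [π.pt_top (le_refl _), π.pt_zero]

end RealPartition

namespace RealPartition
variable {T : ℝ} (π : RealPartition 0 T)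

lemma riemann1_zero (X : ℝ → ℝ) : riemann1 π X 0 = 0 := by
  unfold riemann1 psum
  apply Finset.sum_eq_zero
  intro i _
  dsimp only
  rw [min_eq_right (π.u_nonneg _), min_eq_right (π.u_nonneg _), sub_self, mul_zero]

lemma riemann1_step (X : ℝ → ℝ) {l : ℕ} (hl : l ≤ π.n) {t : ℝ}
    (h1 : π.pt l ≤ t) (h2 : t ≤ π.pt (l + 1)) :
    riemann1 π X t - riemann1 π X (π.pt l) = X (π.pt l) * (X t - X (π.pt l)) := by
  rcases eq_or_lt_of_le hl with hln | hln
  · -- l = n : then t = pt l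
    have h3 : π.pt (l + 1) = π.pt l := by rw [π.pt_top (by omega), π.pt_top (le_of_eq hln.symm)]
    have ht : t = π.pt l := le_antisymm (h3 ▸ h2) h1
    rw [ht, sub_self, sub_self, mul_zero]
  · -- l < n
    unfold riemann1 psum
    rw [← Finset.sum_sub_distrib]
    rw [Finset.sum_eq_single (⟨l, hln⟩ : Fin π.n)]
    · have ea : π.u (⟨l, hln⟩ : Fin π.n).castSucc = π.pt l := (π.pt_castSucc_fin _).symm
      have eb : π.u (⟨l, hln⟩ : Fin π.n).succ = π.pt (l + 1) := (π.pt_succ_fin _).symm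
      dsimp only
      rw [ea, eb, min_eq_right h2, min_eq_left h1, min_eq_left (le_refl _),
        min_eq_right (π.pt_mono (by omega : l ≤ l + 1))]
      ring
    · intro i _ hi
      have hiv : i.val ≠ l := fun hc => hi (by ext; exact hc)
      have ea : π.u i.castSucc = π.pt i.val := (π.pt_castSucc_fin i).symm
      have eb : π.u i.succ = π.pt (i.val + 1) := (π.pt_succ_fin i).symm
      dsimp only
      rcases lt_or_gt_of_ne hiv with hlt | hgt
      · have hb : π.u i.succ ≤ π.pt l := by rw [eb]; exact π.pt_mono (by omega)
        have ha : π.u i.castSucc ≤ π.pt l := le_trans (le_of_lt (π.mono (Fin.castSucc_lt_succ (i := i)))) hb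
        rw [min_eq_left (hb.trans h1), min_eq_left (ha.trans h1), min_eq_left hb, min_eq_left ha]
        ring
      · have ha : t ≤ π.u i.castSucc := by
          rw [ea]; exact h2.trans (π.pt_mono (by omega))
        have hb : t ≤ π.u i.succ := le_trans ha (le_of_lt (π.mono (Fin.castSucc_lt_succ (i := i))))
        have ha' : π.pt l ≤ π.u i.castSucc := h1.trans ha
        have hb' : π.pt l ≤ π.u i.succ := h1.trans hb
        rw [min_eq_right ha, min_eq_right hb, min_eq_right ha', min_eq_right hb']
        ring
    · intro h
      exact absurd (Finset.mem_univ _) h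

lemma quad_sum (X : ℝ → ℝ) {t : ℝ} (h0 : 0 ≤ t) (hT : t ≤ T) :
    X t ^ 2 - X 0 ^ 2 - 2 * riemann1 π X t
      = π.psum (fun a b => (X (min b t) - X (min a t)) ^ 2) := by
  have e1 : π.psum (fun a b => (fun y => X (min y t) ^ 2) b - (fun y => X (min y t) ^ 2) a)
      = X t ^ 2 - X 0 ^ 2 := by
    rw [π.psum_telescope]
    rw [min_eq_right hT, min_eq_left h0]
  unfold psum riemann1 psum at *
  rw [← e1, Finset.mul_sum, ← Finset.sum_sub_distrib]
  apply Finset.sum_congr rfl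
  intro i _
  dsimp only
  rcases le_or_gt (π.u i.castSucc) t with hc | hc
  · rw [min_eq_left hc]; ring
  · have hb : t ≤ π.u i.succ := le_of_lt (hc.trans (π.mono (Fin.castSucc_lt_succ (i := i))))
    rw [min_eq_right (le_of_lt hc), min_eq_right hb]
    ring

lemma mono_step (X : ℝ → ℝ) {s t : ℝ} (h0 : 0 ≤ s) (hst : s ≤ t) (htT : t ≤ T) :
    -((X s - pcApprox π X s) ^ 2)
      ≤ (X t ^ 2 - X 0 ^ 2 - 2 * riemann1 π X t) - (X s ^ 2 - X 0 ^ 2 - 2 * riemann1 π X s) := by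
  classical
  set E : ℝ := (X s - pcApprox π X s) ^ 2 with hE
  have hE0 : 0 ≤ E := sq_nonneg _
  rw [π.quad_sum X (h0.trans hst) htT, π.quad_sum X h0 (hst.trans htT)]
  unfold RealPartition.psum
  rw [← Finset.sum_sub_distrib]
  set P : Fin π.n → Prop := fun i => π.u i.castSucc < s ∧ s < π.u i.succ with hP
  have key : ∀ i : Fin π.n,
      (if P i then -E else 0) ≤
        (X (min (π.u i.succ) t) - X (min (π.u i.castSucc) t)) ^ 2
          - (X (min (π.u i.succ) s) - X (min (π.u i.castSucc) s)) ^ 2 := by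
    intro i
    rcases le_or_gt (π.u i.succ) s with hbs | hbs
    · have has : π.u i.castSucc ≤ s := le_trans (le_of_lt (π.mono (Fin.castSucc_lt_succ (i := i)))) hbs
      rw [if_neg (fun hc => absurd hbs (not_le.mpr hc.2))]
      rw [min_eq_left hbs, min_eq_left has, min_eq_left (hbs.trans hst), min_eq_left (has.trans hst)]
      simp
    · rcases le_or_gt s (π.u i.castSucc) with hsa | hsa
      · have hsb : s ≤ π.u i.succ := le_of_lt hbs
        rw [min_eq_right hsa, min_eq_right hsb, sub_self]
        have : (if P i then -E else 0) ≤ 0 := by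
          split
          · exact neg_nonpos.mpr hE0
          · exact le_refl 0
        refine le_trans this ?_
        have h2 := sq_nonneg (X (min (π.u i.succ) t) - X (min (π.u i.castSucc) t))
        simpa using h2
      · rw [if_pos ⟨hsa, hbs⟩]
        have hfl : pcApprox π X s = X (π.u i.castSucc) := by
          unfold pcApprox
          rw [π.floorPt_eq i (le_of_lt hsa) hbs]
        rw [min_eq_right (le_of_lt hbs), min_eq_left (le_of_lt hsa)]
        have : E = (X s - X (π.u i.castSucc)) ^ 2 := by rw [hE, hfl]
        rw [this]
        have := sq_nonneg (X (min (π.u i.succ) t) - X (min (π.u i.castSucc) t))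
        linarith
  have card_le : (Finset.univ.filter P).card ≤ 1 := by
    apply Finset.card_le_one.mpr
    intro i hi j hj
    simp only [Finset.mem_filter] at hi hj
    by_contra hne
    rcases lt_or_gt_of_ne hne with hlt | hlt
    · have : π.u i.succ ≤ π.u j.castSucc := π.mono.monotone (by
        simp [Fin.le_def]; omega)
      have := hi.2.2.trans_le this
      exact absurd hj.2.1 (not_lt.mpr (le_of_lt this))
    · have : π.u j.succ ≤ π.u i.castSucc := π.mono.monotone (by
        simp [Fin.le_def]; omega)
      have := hj.2.2.trans_le this
      exact absurd hi.2.1 (not_lt.mpr (le_of_lt this))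
  have step1 : -E ≤ ∑ i : Fin π.n, (if P i then -E else 0) := by
    rw [Finset.sum_ite, Finset.sum_const_zero, add_zero, Finset.sum_const, nsmul_eq_mul]
    have hc0 : (0:ℝ) ≤ ((Finset.univ.filter P).card : ℝ) := Nat.cast_nonneg _
    have hc1 : ((Finset.univ.filter P).card : ℝ) ≤ 1 := by exact_mod_cast card_le
    nlinarith
  exact le_trans step1 (Finset.sum_le_sum (fun i _ => key i))

end RealPartition

set_option maxHeartbeats 2000000 in
/-- a one-dimensional path satisfying Property (RIE) fulfils the hypotheses
of the rough exponential: with canonical lift `XX_{s,t} = ∫_s^t X dX − X_s X_{s,t}` built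
from the limit `I` of the Riemann sums, one has (i) `XX_{t−,t} = 0`; (ii) the bracket
`[𝐗]_t = (X_{0,t})^2 − 2 XX_{0,t}` has jumps `Δ[𝐗]_t = (ΔX_t)^2`; (iii) `[𝐗]` is increasing
(hence of finite 1-variation); and (iv) `Σ_{t ∈ (0,T]} (ΔX_t)^2 ≤ [𝐗]_T < ∞`. -/
theorem statement_19
    (p T : ℝ) (hp : 2 < p ∧ p < 3) (hT : 0 < T)
    (Pseq : ℕ → RealPartition 0 T) (X : ℝ → ℝ)
    (hX : RIE1 p T Pseq X)
    (I : ℝ → ℝ)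
    (hI : TendstoUniformlyOn (fun n => riemann1 (Pseq n) X) I atTop (Set.Icc 0 T)) :
    (∀ t ∈ Set.Ioc (0:ℝ) T,
      Tendsto (fun s => I t - I s - X s * (X t - X s)) (nhdsWithin t (Set.Iio t)) (nhds 0)) ∧
    (∀ t ∈ Set.Ioc (0:ℝ) T,
      bracket1 X (fun s u => I u - I s - X s * (X u - X s)) t
        - Function.leftLim (bracket1 X (fun s u => I u - I s - X s * (X u - X s))) t
        = jump1 X t ^ 2) ∧
    MonotoneOn (bracket1 X (fun s u => I u - I s - X s * (X u - X s))) (Set.Icc 0 T) ∧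
    FiniteVar 1 (incr (bracket1 X (fun s u => I u - I s - X s * (X u - X s)))) 0 T ∧
    Summable (fun u : Set.Ioc (0:ℝ) T => jump1 X u.1 ^ 2) ∧
    jumpSqSum X T ≤ bracket1 X (fun s u => I u - I s - X s * (X u - X s)) T := by
  classical
  obtain ⟨hp2, hp3⟩ := hp
  have hp0 : (0:ℝ) < p := by linarith
  obtain ⟨w, hwc, hrie⟩ := hX.rie_bound
  obtain ⟨a, b, ha0, hb0, hab, hXw, hRw⟩ := hrie
  set XX : ℝ → ℝ → ℝ := fun s u => I u - I s - X s * (X u - X s) with hXXdef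
  set B : ℝ → ℝ := bracket1 X XX with hBdef
  have h0T : (0:ℝ) ∈ Set.Icc (0:ℝ) T := ⟨le_refl _, le_of_lt hT⟩
  -- I 0 = 0
  have hI0 : I 0 = 0 := by
    have h1 : Tendsto (fun n => riemann1 (Pseq n) X 0) atTop (nhds (I 0)) := hI.tendsto_at h0T
    have h2 : (fun n => riemann1 (Pseq n) X 0) = fun _ => (0:ℝ) := by
      funext n; exact (Pseq n).riemann1_zero X
    rw [h2] at h1
    exact tendsto_nhds_unique h1 tendsto_const_nhds
  have hB_eq : ∀ u : ℝ, B u = X u ^ 2 - X 0 ^ 2 - 2 * I u := by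
    intro u
    rw [hBdef]
    simp only [bracket1, hXXdef, hI0]
    ring
  have hB0 : B 0 = 0 := by rw [hB_eq, hI0]; ring
  clear_value XX B
  -- pointwise limits
  have hQlim : ∀ u : ℝ, u ∈ Set.Icc (0:ℝ) T →
      Tendsto (fun n => X u ^ 2 - X 0 ^ 2 - 2 * riemann1 (Pseq n) X u) atTop (nhds (B u)) := by
    intro u hu
    have h2 : Tendsto (fun n => X u ^ 2 - X 0 ^ 2 - 2 * riemann1 (Pseq n) X u) atTop
        (nhds (X u ^ 2 - X 0 ^ 2 - 2 * I u)) :=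
      tendsto_const_nhds.sub ((hI.tendsto_at hu).const_mul 2)
    rw [hB_eq u]
    exact h2
  -- monotonicity
  have hmono : MonotoneOn B (Set.Icc 0 T) := by
    rintro s ⟨hs0, hsT⟩ t ⟨ht0, htT⟩ hst
    have key : ∀ n : ℕ, -((X s - pcApprox (Pseq n) X s) ^ 2)
        ≤ (X t ^ 2 - X 0 ^ 2 - 2 * riemann1 (Pseq n) X t)
          - (X s ^ 2 - X 0 ^ 2 - 2 * riemann1 (Pseq n) X s) :=
      fun n => (Pseq n).mono_step X hs0 hst htT
    have l1 : Tendsto (fun n => -((X s - pcApprox (Pseq n) X s) ^ 2)) atTop (nhds 0) := by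
      have hpc := hX.pc_unif.tendsto_at (show s ∈ Set.Icc 0 T from ⟨hs0, hsT⟩)
      have h3 := ((Tendsto.sub
        (tendsto_const_nhds : Tendsto (fun _ : ℕ => X s) atTop (nhds (X s))) hpc).pow 2).neg
      simpa using h3
    have l2 := (hQlim t ⟨ht0, htT⟩).sub (hQlim s ⟨hs0, hsT⟩)
    have h4 := le_of_tendsto_of_tendsto' l1 l2 key
    linarith
  -- X bound
  have hw0T : 0 ≤ w 0 T := hwc.1 0 T (le_refl _) (le_of_lt hT) (le_refl _)
  set M0 : ℝ := (w 0 T) ^ (1/p) with hM0def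
  have hM00 : 0 ≤ M0 := Real.rpow_nonneg hw0T _
  have hwmono : ∀ a' b' c' d' : ℝ, 0 ≤ a' → a' ≤ b' → b' ≤ c' → c' ≤ d' → d' ≤ T →
      w b' c' ≤ w a' d' := by
    intro a' b' c' d' h1 h2 h3 h4 h5
    have n1 : 0 ≤ w a' b' := hwc.1 _ _ h1 h2 (by linarith)
    have n2 : 0 ≤ w c' d' := hwc.1 _ _ (by linarith) h4 h5
    have s1 := hwc.2 a' b' c' h1 h2 h3 (by linarith)
    have s2 := hwc.2 a' c' d' h1 (by linarith) h4 h5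
    linarith
  have hXbnd : ∀ u v : ℝ, 0 ≤ u → u ≤ v → v ≤ T → |X v - X u| ≤ M0 := by
    intro u v h1 h2 h3
    have hle : |X v - X u| ^ p ≤ w 0 T := by
      have h4 := hXw u v h1 h2 h3
      have h5 : w u v ≤ w 0 T := hwmono 0 u v T (le_refl _) h1 h2 h3 (le_refl _)
      have h6 : 0 ≤ w u v := hwc.1 u v h1 h2 h3
      have h7 : a * w u v ≤ 1 * w u v := mul_le_mul_of_nonneg_right (by linarith) h6
      rw [one_mul] at h7
      linarith
    have h5 : (|X v - X u| ^ p) ^ (1/p) ≤ (w 0 T) ^ (1/p) :=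
      Real.rpow_le_rpow (Real.rpow_nonneg (abs_nonneg _) _) hle (by positivity)
    rw [← Real.rpow_mul (abs_nonneg _), show p * (1/p) = 1 by field_simp, Real.rpow_one] at h5
    exact h5
  -- smallness of w near a left endpoint
  have hWsmall : ∀ t : ℝ, 0 < t → t ≤ T → ∀ ε : ℝ, 0 < ε →
      ∃ s₀ : ℝ, 0 ≤ s₀ ∧ s₀ < t ∧ ∀ σ τ : ℝ, s₀ ≤ σ → σ ≤ τ → τ < t → w σ τ ≤ ε := by
    intro t ht0 htT ε hε
    have hgmono : ∀ u v : ℝ, 0 ≤ u → u ≤ v → v ≤ T → w 0 u ≤ w 0 v := by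
      intro u v h1 h2 h3
      have h4 := hwc.2 0 u v (le_refl _) h1 h2 h3
      have h5 := hwc.1 u v h1 h2 h3
      linarith
    have hne : ((fun u => w 0 u) '' Set.Ico 0 t).Nonempty :=
      ⟨w 0 0, 0, ⟨le_refl _, ht0⟩, rfl⟩
    have hbdd : BddAbove ((fun u => w 0 u) '' Set.Ico 0 t) := by
      refine ⟨w 0 T, ?_⟩
      rintro y ⟨x, ⟨hx0, hxt⟩, rfl⟩
      exact hgmono x T hx0 (le_of_lt (lt_of_lt_of_le hxt htT)) (le_refl _)
    obtain ⟨y, hy, hy2⟩ := exists_lt_of_lt_csSup hne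
      (show sSup ((fun u => w 0 u) '' Set.Ico 0 t) - ε < sSup ((fun u => w 0 u) '' Set.Ico 0 t)
        by linarith)
    obtain ⟨s₀, hs₀, rfl⟩ := hy
    refine ⟨s₀, hs₀.1, hs₀.2, ?_⟩
    intro σ τ h1 h2 h3
    have hτT : τ ≤ T := le_of_lt (lt_of_lt_of_le h3 htT)
    have h4 := hwc.2 0 σ τ (le_refl _) (hs₀.1.trans h1) h2 hτT
    have h5 : w 0 τ ≤ sSup ((fun u => w 0 u) '' Set.Ico 0 t) :=
      le_csSup hbdd ⟨τ, ⟨hs₀.1.trans (h1.trans h2), h3⟩, rfl⟩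
    have h6 : w 0 s₀ ≤ w 0 σ := hgmono s₀ σ hs₀.1 h1 (h2.trans hτT)
    linarith
  -- left limits of X
  have hnhds : ∀ t : ℝ, 0 < t → nhdsWithin t (Set.Iio t) = nhdsWithin t (Set.Ico 0 t) := by
    intro t ht0
    apply nhdsWithin_eq_nhdsWithin (s := Set.Ioi (0:ℝ)) (Set.mem_Ioi.mpr ht0) isOpen_Ioi
    ext x
    simp only [Set.mem_inter_iff, Set.mem_Iio, Set.mem_Ioi, Set.mem_Ico]
    constructor
    · rintro ⟨h1, h2⟩; exact ⟨⟨le_of_lt h2, h1⟩, h2⟩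
    · rintro ⟨⟨h1, h2⟩, h3⟩; exact ⟨h2, h3⟩
  have hXleftT : ∀ t : ℝ, t ∈ Set.Ioc (0:ℝ) T →
      Tendsto X (nhdsWithin t (Set.Iio t)) (nhds (Function.leftLim X t)) := by
    intro t ht
    obtain ⟨L, hL⟩ := hX.cadlag.2 t ht
    have hL' : Tendsto X (nhdsWithin t (Set.Iio t)) (nhds L) := by
      rw [hnhds t ht.1]; exact hL
    rw [leftLim_eq_of_tendsto hL']
    exact hL'
  -- the key left-limit of the bracket
  have hJ : ∀ t : ℝ, t ∈ Set.Ioc (0:ℝ) T →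
      Tendsto B (nhdsWithin t (Set.Iio t))
        (nhds (B t - (X t - Function.leftLim X t) ^ 2)) := by
    intro t ht
    obtain ⟨ht0, htT⟩ := ht
    set L := Function.leftLim X t with hLdef
    have hXL : Tendsto X (nhdsWithin t (Set.Iio t)) (nhds L) := hXleftT t ⟨ht0, htT⟩
    clear_value L
    set c : ℝ := B t - (X t - L) ^ 2 with hcdef
    clear_value c
    have step1 : ∀ ε : ℝ, 0 < ε → ∀ s₁ : ℝ, s₁ < t →
        ∃ σ : ℝ, s₁ < σ ∧ 0 ≤ σ ∧ σ < t ∧ |B σ - c| ≤ ε := by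
      intro ε hε s₁ hs₁
      set η : ℝ := min 1 (ε / (6 * M0 + 7)) with hηdef
      have hη0 : 0 < η := lt_min one_pos (by positivity)
      have hη1 : η ≤ 1 := min_le_left _ _
      have hηε : η * (6 * M0 + 7) ≤ ε := by
        have h1 : η ≤ ε / (6 * M0 + 7) := min_le_right _ _
        have h2 : (0:ℝ) < 6 * M0 + 7 := by linarith
        calc η * (6 * M0 + 7) ≤ (ε / (6 * M0 + 7)) * (6 * M0 + 7) :=
              mul_le_mul_of_nonneg_right h1 (by linarith)
          _ = ε := by field_simp
      set ε' : ℝ := η ^ (p / 2) with hε'def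
      have hε'0 : 0 < ε' := Real.rpow_pos_of_pos hη0 _
      have hε'η : ε' ≤ η := by
        have h1 : η ^ (p/2) ≤ η ^ (1:ℝ) :=
          Real.rpow_le_rpow_of_exponent_ge hη0 hη1 (by linarith)
        rw [Real.rpow_one] at h1
        exact h1
      have he2 : ε' ^ (2/p) = η := by
        rw [hε'def, ← Real.rpow_mul (le_of_lt hη0), show p/2 * (2/p) = 1 by field_simp,
          Real.rpow_one]
      clear_value η ε'
      obtain ⟨s₀, hs₀0, hs₀t, hs₀w⟩ := hWsmall t ht0 htT ε' hε'0
      obtain ⟨δ₁, hδ₁0, hδ₁⟩ := Metric.tendsto_nhdsWithin_nhds.mp hXL ε' hε'0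
      have hs₁'t : max s₁ 0 < t := max_lt hs₁ ht0
      set δ : ℝ := min (δ₁ / 2) (min (t - s₀) ((t - max s₁ 0) / 2)) with hδdef
      have hδ0 : 0 < δ := lt_min (by linarith) (lt_min (by linarith) (by linarith))
      have hδa : δ ≤ δ₁ / 2 := min_le_left _ _
      have hδb : δ ≤ t - s₀ := le_trans (min_le_right _ _) (min_le_left _ _)
      have hδc : δ ≤ (t - max s₁ 0) / 2 := le_trans (min_le_right _ _) (min_le_right _ _)
      have hδt : δ ≤ t := by linarith
      clear_value δ
      have hXnear : ∀ u : ℝ, t - δ ≤ u → u < t → |X u - L| ≤ ε' := by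
        intro u h1 h2
        have h3 : dist u t < δ₁ := by
          rw [Real.dist_eq, abs_of_nonpos (by linarith)]
          linarith
        have h4 := hδ₁ (show u ∈ Set.Iio t from h2) h3
        rw [Real.dist_eq] at h4
        exact le_of_lt h4
      have hev1 : ∀ᶠ n in atTop, (Pseq n).mesh < δ / 2 :=
        hX.mesh_lim.eventually (gt_mem_nhds (by linarith))
      have hev2 : ∀ᶠ n in atTop, ∀ x ∈ Set.Icc (0:ℝ) T,
          dist (I x) (riemann1 (Pseq n) X x) < ε' :=
        Metric.tendstoUniformlyOn_iff.mp hI ε' hε'0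
      obtain ⟨n, hmesh, hunif⟩ := (hev1.and hev2).exists
      have hmesh0 : 0 ≤ (Pseq n).mesh := (Pseq n).mesh_nonneg hT
      have htδ2 : 0 ≤ t - δ / 2 := by linarith
      have hσle : (Pseq n).pt ((Pseq n).idx (t - δ / 2)) ≤ t - δ / 2 := (Pseq n).floor_le htδ2
      set σ : ℝ := (Pseq n).pt ((Pseq n).idx (t - δ / 2)) with hσdef
      have hσge : t - δ ≤ σ := by
        have h1 := (Pseq n).floor_ge htδ2 (by linarith) hT
        rw [← hσdef] at h1
        linarith
      have hσ0 : 0 ≤ σ := by rw [hσdef]; exact (Pseq n).pt_nonneg _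
      have hσt : σ < t := by linarith
      have hσs₁ : s₁ < σ := by
        have h1 : s₁ ≤ max s₁ 0 := le_max_left _ _
        linarith
      -- construct the index l
      have hfloor := (Pseq n).floor_le (le_of_lt ht0)
      have hmain : ∃ l : ℕ, l ≤ (Pseq n).n ∧ (Pseq n).pt l ≤ t ∧ t ≤ (Pseq n).pt (l + 1) ∧
          (Pseq n).pt l < t ∧ t - (Pseq n).mesh ≤ (Pseq n).pt l := by
        rcases eq_or_lt_of_le hfloor with heq | hlt
        · -- t is a partition point
          have hl'n : (Pseq n).idx t ≤ (Pseq n).n := (Pseq n).idx_le t (le_of_lt ht0)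
          have hl'0 : (Pseq n).idx t ≠ 0 := by
            intro hc
            rw [hc, (Pseq n).pt_zero] at heq
            exact absurd heq (ne_of_lt ht0)
          have hl1n : (Pseq n).idx t - 1 < (Pseq n).n := by omega
          refine ⟨(Pseq n).idx t - 1, by omega, ?_, ?_, ?_, ?_⟩
          · exact le_of_lt (lt_of_lt_of_le ((Pseq n).pt_lt_pt (by omega) hl'n) (le_of_eq heq))
          · rw [show (Pseq n).idx t - 1 + 1 = (Pseq n).idx t by omega, heq]
          · exact lt_of_lt_of_le ((Pseq n).pt_lt_pt (by omega) hl'n) (le_of_eq heq)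
          · have hgap := (Pseq n).gap_le_mesh ⟨(Pseq n).idx t - 1, hl1n⟩
            have e1 : (Pseq n).u (⟨(Pseq n).idx t - 1, hl1n⟩ : Fin (Pseq n).n).succ
                = (Pseq n).pt ((Pseq n).idx t - 1 + 1) := ((Pseq n).pt_succ_fin _).symm
            have e2 : (Pseq n).u (⟨(Pseq n).idx t - 1, hl1n⟩ : Fin (Pseq n).n).castSucc
                = (Pseq n).pt ((Pseq n).idx t - 1) := ((Pseq n).pt_castSucc_fin _).symm
            rw [e1, e2, show (Pseq n).idx t - 1 + 1 = (Pseq n).idx t by omega, heq] at hgap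
            linarith
        · -- t is not a partition point
          have hl'n : (Pseq n).idx t ≤ (Pseq n).n := (Pseq n).idx_le t (le_of_lt ht0)
          have hl'lt : (Pseq n).idx t < (Pseq n).n := by
            rcases eq_or_lt_of_le hl'n with he | h
            · exfalso
              rw [(Pseq n).pt_top (le_of_eq he.symm)] at hlt
              linarith
            · exact h
          refine ⟨(Pseq n).idx t, hl'n, hfloor, le_of_lt ((Pseq n).lt_of_idx_lt (le_of_lt ht0) hl'lt),
            hlt, ?_⟩
          have h1 := (Pseq n).floor_ge (le_of_lt ht0) htT hT
          linarith
      obtain ⟨l, hln, hρ1, hρ2, hρt, hρmesh⟩ := hmain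
      set ρ : ℝ := (Pseq n).pt l with hρdef
      have hρ0 : 0 ≤ ρ := by rw [hρdef]; exact (Pseq n).pt_nonneg l
      have hσρ : σ < ρ := by linarith
      have hjl : (Pseq n).idx (t - δ / 2) < l := by
        by_contra hc
        push_neg at hc
        have := (Pseq n).pt_mono hc
        rw [← hρdef, ← hσdef] at this
        linarith
      have hC1 := hRw n ((Pseq n).idx (t - δ / 2)) l hjl hln
      rw [← hρdef, ← hσdef] at hC1
      have hwσρ : w σ ρ ≤ ε' := hs₀w σ ρ (by linarith) (le_of_lt hσρ) (by linarith)
      have hCb : |riemann1 (Pseq n) X ρ - riemann1 (Pseq n) X σ - X σ * (X ρ - X σ)| ≤ η := by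
        set Cq := riemann1 (Pseq n) X ρ - riemann1 (Pseq n) X σ - X σ * (X ρ - X σ) with hCq
        have hw0 : 0 ≤ w σ ρ := hwc.1 σ ρ hσ0 (le_of_lt hσρ) (by linarith)
        have h1 : |Cq| ^ (p/2) ≤ ε' := by
          have h9 : b * w σ ρ ≤ 1 * w σ ρ := mul_le_mul_of_nonneg_right (by linarith) hw0
          rw [one_mul] at h9
          exact le_trans hC1 (by linarith)
        have h2 : (|Cq| ^ (p/2)) ^ (2/p) ≤ ε' ^ (2/p) :=
          Real.rpow_le_rpow (Real.rpow_nonneg (abs_nonneg _) _) h1 (by positivity)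
        have e1 : (|Cq| ^ (p/2)) ^ (2/p) = |Cq| := by
          rw [← Real.rpow_mul (abs_nonneg _), show p/2 * (2/p) = 1 by field_simp, Real.rpow_one]
        rw [e1, he2] at h2
        exact h2
      have hstep := (Pseq n).riemann1_step X hln hρ1 hρ2
      rw [← hρdef] at hstep
      have hXσ : |X σ - L| ≤ ε' := hXnear σ hσge hσt
      have hXρ : |X ρ - L| ≤ ε' := hXnear ρ (by linarith) hρt
      have hXtρ : |X t - X ρ| ≤ M0 := hXbnd ρ t hρ0 (le_of_lt hρt) htT
      have hXtσ : |X t - X σ| ≤ M0 := hXbnd σ t hσ0 (le_of_lt hσt) htT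
      have hIt : |I t - riemann1 (Pseq n) X t| ≤ ε' := by
        have h1 := hunif t ⟨le_of_lt ht0, htT⟩
        rw [Real.dist_eq] at h1
        exact le_of_lt h1
      have hIσ : |I σ - riemann1 (Pseq n) X σ| ≤ ε' := by
        have h1 := hunif σ ⟨hσ0, by linarith⟩
        rw [Real.dist_eq] at h1
        exact le_of_lt h1
      have hXXid : I t - I σ - X σ * (X t - X σ)
          = (I t - riemann1 (Pseq n) X t) - (I σ - riemann1 (Pseq n) X σ)
            + (riemann1 (Pseq n) X ρ - riemann1 (Pseq n) X σ - X σ * (X ρ - X σ))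
            + (X ρ - X σ) * (X t - X ρ) := by
        linear_combination hstep
      have hXρσ : |X ρ - X σ| ≤ 2 * η := by
        have h1 := abs_sub_le (X ρ) L (X σ)
        rw [abs_sub_comm L (X σ)] at h1
        linarith
      have hXXbnd : |I t - I σ - X σ * (X t - X σ)| ≤ 3 * η + 2 * η * M0 := by
        rw [hXXid]
        have h1 := abs_add_three
          ((I t - riemann1 (Pseq n) X t) - (I σ - riemann1 (Pseq n) X σ))
          (riemann1 (Pseq n) X ρ - riemann1 (Pseq n) X σ - X σ * (X ρ - X σ))
          ((X ρ - X σ) * (X t - X ρ))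
        have h2 : |(I t - riemann1 (Pseq n) X t) - (I σ - riemann1 (Pseq n) X σ)|
            ≤ |I t - riemann1 (Pseq n) X t| + |I σ - riemann1 (Pseq n) X σ| :=
          abs_sub _ _
        have h3 : |(X ρ - X σ) * (X t - X ρ)| ≤ (2 * η) * M0 := by
          rw [abs_mul]
          exact mul_le_mul hXρσ hXtρ (abs_nonneg _) (by linarith)
        linarith
      refine ⟨σ, hσs₁, hσ0, hσt, ?_⟩
      have hBt : B t - B σ = (X t - X σ)^2 - 2 * (I t - I σ - X σ * (X t - X σ)) := by
        rw [hB_eq t, hB_eq σ]; ring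
      have hXtL : |X t - L| ≤ M0 + 1 := by
        have h1 := abs_sub_le (X t) (X ρ) L
        linarith
      have e3 : B σ - c = (X t - L)^2 - (X t - X σ)^2
          + 2 * (I t - I σ - X σ * (X t - X σ)) := by
        rw [hcdef]; linear_combination -hBt
      have hdiff : |(X t - L)^2 - (X t - X σ)^2| ≤ η * (2 * M0 + 1) := by
        have h1 : (X t - L)^2 - (X t - X σ)^2 = (X σ - L) * ((X t - L) + (X t - X σ)) := by
          ring
        rw [h1, abs_mul]
        have h2 : |X σ - L| ≤ η := le_trans hXσ hε'η
        have h3 : |(X t - L) + (X t - X σ)| ≤ 2 * M0 + 1 := by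
          have h4 := abs_add_le (X t - L) (X t - X σ)
          linarith
        exact mul_le_mul h2 h3 (abs_nonneg _) (le_of_lt hη0)
      have hfinal : |B σ - c| ≤ η * (6 * M0 + 7) := by
        rw [e3]
        have h1 := abs_add_le ((X t - L)^2 - (X t - X σ)^2)
          (2 * (I t - I σ - X σ * (X t - X σ)))
        rw [abs_mul, abs_two] at h1
        have h2 : |(X t - L)^2 - (X t - X σ)^2 + 2 * (I t - I σ - X σ * (X t - X σ))|
            ≤ η * (2 * M0 + 1) + 2 * (3 * η + 2 * η * M0) := by linarith
        have h5 : η * (2 * M0 + 1) + 2 * (3 * η + 2 * η * M0) = η * (6 * M0 + 7) := by ring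
        linarith
      exact le_trans hfinal hηε
    -- assemble the tendsto from step1 and monotonicity
    have hub : ∀ s : ℝ, 0 ≤ s → s < t → B s ≤ c := by
      intro s h1 h2
      refine le_of_forall_pos_le_add ?_
      intro ε hε
      obtain ⟨σ, hσ1, hσ2, hσ3, hσ4⟩ := step1 ε hε s h2
      have h3 : B s ≤ B σ := hmono ⟨h1, by linarith⟩ ⟨hσ2, by linarith⟩ (le_of_lt hσ1)
      have h4 := abs_le.mp hσ4
      linarith [h4.1, h4.2]
    refine Metric.tendsto_nhds.mpr ?_
    intro ε hε
    obtain ⟨σ, hσ1, hσ2, hσ3, hσ4⟩ := step1 (ε/2) (by linarith) (t - 1) (by linarith)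
    filter_upwards [Ioo_mem_nhdsLT_of_mem (show t ∈ Set.Ioc σ t from ⟨hσ3, le_refl t⟩)]
    intro s hs
    have h1 : B σ ≤ B s := hmono ⟨hσ2, by linarith⟩
      ⟨by linarith [hs.1], le_trans (le_of_lt hs.2) htT⟩ (le_of_lt hs.1)
    have h2 : B s ≤ c := hub s (by linarith [hs.1]) hs.2
    have h3 := abs_le.mp hσ4
    rw [Real.dist_eq]
    have h4 : |B s - c| ≤ ε/2 := abs_le.mpr ⟨by linarith [h3.1], by linarith⟩
    linarith
  -- conclusion (i)
  have conc1 : ∀ t ∈ Set.Ioc (0:ℝ) T,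
      Tendsto (fun s => I t - I s - X s * (X t - X s)) (nhdsWithin t (Set.Iio t)) (nhds 0) := by
    intro t ht
    have heq : ∀ s : ℝ, I t - I s - X s * (X t - X s)
        = ((X t - X s)^2 - (B t - B s)) / 2 := by
      intro s
      rw [hB_eq t, hB_eq s]; ring
    have h1 : Tendsto (fun s => X t - X s) (nhdsWithin t (Set.Iio t))
        (nhds (X t - Function.leftLim X t)) := tendsto_const_nhds.sub (hXleftT t ht)
    have h2 : Tendsto (fun s => B t - B s) (nhdsWithin t (Set.Iio t))
        (nhds (B t - (B t - (X t - Function.leftLim X t)^2))) :=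
      tendsto_const_nhds.sub (hJ t ht)
    have h3 := ((h1.pow 2).sub h2).div_const 2
    have h4 : ((X t - Function.leftLim X t)^2
        - (B t - (B t - (X t - Function.leftLim X t)^2)))/2 = 0 := by ring
    rw [h4] at h3
    exact h3.congr (fun s => (heq s).symm)
  -- conclusion (ii)
  have conc2 : ∀ t ∈ Set.Ioc (0:ℝ) T,
      B t - Function.leftLim B t = jump1 X t ^ 2 := by
    intro t ht
    have h1 := leftLim_eq_of_tendsto (hJ t ht)
    rw [h1]
    simp only [jump1]
    ring
  -- conclusion (iv): finite 1-variation
  have conc4 : FiniteVar 1 (incr B) 0 T := by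
    refine ⟨B T - B 0, ?_⟩
    rintro x ⟨π', rfl⟩
    show varSum 1 (incr B) π' ≤ B T - B 0
    have h1 : varSum 1 (incr B) π' = π'.psum (fun a' b' => B b' - B a') := by
      unfold varSum RealPartition.psum
      apply Finset.sum_congr rfl
      intro i _
      dsimp only
      have hab' : π'.u i.castSucc ≤ π'.u i.succ := le_of_lt (π'.mono (Fin.castSucc_lt_succ (i := i)))
      have h2 : B (π'.u i.castSucc) ≤ B (π'.u i.succ) :=
        hmono ⟨π'.u_nonneg _, π'.u_le_T _⟩ ⟨π'.u_nonneg _, π'.u_le_T _⟩ hab'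
      rw [show incr B (π'.u i.castSucc) (π'.u i.succ)
        = B (π'.u i.succ) - B (π'.u i.castSucc) from rfl]
      rw [Real.norm_eq_abs, Real.rpow_one, abs_of_nonneg (by linarith)]
    rw [h1, π'.psum_telescope]
  -- left limit of bracket dominates earlier values
  have hlBge : ∀ u : ℝ, u ∈ Set.Ioc (0:ℝ) T → ∀ v : ℝ, 0 ≤ v → v < u →
      B v ≤ Function.leftLim B u := by
    intro u hu v hv0 hvu
    have htend := hJ u hu
    have hlB := leftLim_eq_of_tendsto htend
    rw [hlB]
    refine ge_of_tendsto htend ?_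
    filter_upwards [Ioo_mem_nhdsLT_of_mem (show u ∈ Set.Ioc v u from ⟨hvu, le_refl u⟩)]
    intro x hx
    exact hmono ⟨hv0, by linarith [hx.2, hu.2]⟩
      ⟨by linarith [hx.1], le_trans (le_of_lt hx.2) hu.2⟩ (le_of_lt hx.1)
  -- finite sums of bracket jumps
  have claim : ∀ (N : ℕ) (F : Finset ↥(Set.Ioc (0:ℝ) T)), F.card ≤ N →
      ∀ c : ℝ, 0 ≤ c → c ≤ T → (∀ u ∈ F, (u:ℝ) ≤ c) →
      ∑ u ∈ F, (B u.1 - Function.leftLim B u.1) ≤ B c - B 0 := by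
    intro N
    induction N with
    | zero =>
      intro F hF c h1 h2 _
      obtain rfl := Finset.card_eq_zero.mp (Nat.le_zero.mp hF)
      simp only [Finset.sum_empty]
      have := hmono ⟨le_refl (0:ℝ), le_of_lt hT⟩ ⟨h1, h2⟩ h1
      linarith
    | succ N ih =>
      intro F hF c h1 h2 hFc
      rcases F.eq_empty_or_nonempty with rfl | hne
      · simp only [Finset.sum_empty]
        have := hmono ⟨le_refl (0:ℝ), le_of_lt hT⟩ ⟨h1, h2⟩ h1
        linarith
      · have hu'F : F.max' hne ∈ F := F.max'_mem hne
        have hu'I : ((F.max' hne : ↥(Set.Ioc (0:ℝ) T)) : ℝ) ∈ Set.Ioc (0:ℝ) T :=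
          (F.max' hne).2
        have hcard : (F.erase (F.max' hne)).card ≤ N := by
          have := Finset.card_erase_of_mem hu'F
          omega
        have hBu'c : B ((F.max' hne : ↥(Set.Ioc (0:ℝ) T)) : ℝ) ≤ B c :=
          hmono ⟨le_of_lt hu'I.1, hu'I.2⟩ ⟨h1, h2⟩ (hFc _ hu'F)
        have hsplit : ∑ u ∈ F.erase (F.max' hne), (B u.1 - Function.leftLim B u.1)
            + (B ((F.max' hne : ↥(Set.Ioc (0:ℝ) T)) : ℝ)
              - Function.leftLim B ((F.max' hne : ↥(Set.Ioc (0:ℝ) T)) : ℝ))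
            = ∑ u ∈ F, (B u.1 - Function.leftLim B u.1) :=
          Finset.sum_erase_add F _ hu'F
        by_cases hne' : (F.erase (F.max' hne)).Nonempty
        · have hv'F := (F.erase (F.max' hne)).max'_mem hne'
          have hv'lt : (((F.erase (F.max' hne)).max' hne' : ↥(Set.Ioc (0:ℝ) T)) : ℝ)
              < ((F.max' hne : ↥(Set.Ioc (0:ℝ) T)) : ℝ) := by
            have h3 : (F.erase (F.max' hne)).max' hne' ≤ F.max' hne :=
              F.le_max' _ (Finset.mem_of_mem_erase hv'F)
            have h4 : (F.erase (F.max' hne)).max' hne' ≠ F.max' hne :=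
              Finset.ne_of_mem_erase hv'F
            exact lt_of_le_of_ne h3 (fun hc => h4 (Subtype.coe_injective hc))
          have hIH := ih (F.erase (F.max' hne)) hcard
            (((F.erase (F.max' hne)).max' hne' : ↥(Set.Ioc (0:ℝ) T)) : ℝ)
            (le_of_lt ((F.erase (F.max' hne)).max' hne').2.1)
            ((F.erase (F.max' hne)).max' hne').2.2
            (fun x hx => (F.erase (F.max' hne)).le_max' x hx)
          have hkey : B (((F.erase (F.max' hne)).max' hne' : ↥(Set.Ioc (0:ℝ) T)) : ℝ)
              ≤ Function.leftLim B ((F.max' hne : ↥(Set.Ioc (0:ℝ) T)) : ℝ) :=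
            hlBge _ hu'I _ (le_of_lt ((F.erase (F.max' hne)).max' hne').2.1) hv'lt
          rw [← hsplit]
          linarith
        · have hFs : F = {F.max' hne} := by
            apply Finset.eq_singleton_iff_unique_mem.mpr
            refine ⟨hu'F, ?_⟩
            intro x hx
            by_contra hxne
            exact hne' ⟨x, Finset.mem_erase.mpr ⟨hxne, hx⟩⟩
          rw [hFs, Finset.sum_singleton]
          have hkey : B 0 ≤ Function.leftLim B ((F.max' hne : ↥(Set.Ioc (0:ℝ) T)) : ℝ) :=
            hlBge _ hu'I 0 (le_refl _) hu'I.1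
          linarith
  have hjsum : ∀ F : Finset ↥(Set.Ioc (0:ℝ) T), ∑ u ∈ F, (jump1 X u.1)^2 ≤ B T - B 0 := by
    intro F
    have h1 : ∑ u ∈ F, (jump1 X u.1)^2 = ∑ u ∈ F, (B u.1 - Function.leftLim B u.1) :=
      Finset.sum_congr rfl (fun u _ => by rw [← conc2 u.1 u.2])
    rw [h1]
    exact claim F.card F (le_refl _) T (le_of_lt hT) (le_refl _) (fun u _ => u.2.2)
  have conc5 : Summable (fun u : ↥(Set.Ioc (0:ℝ) T) => jump1 X u.1 ^ 2) :=
    summable_of_sum_le (fun u => sq_nonneg _) hjsum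
  refine ⟨conc1, conc2, hmono, conc4, conc5, ?_⟩
  have h5 := Summable.tsum_le_of_sum_le conc5 hjsum
  unfold jumpSqSum
  linarith


end
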